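/- Fix real q with 0 < q < 1 and s ∈ ℂ. Define F(t) = (1−q)^s · Σ_{r=0}^∞ ((s)_r / r!) · q^{t+r} / (1 − q^{t+r}) for complex t. Then for every t ∈ ℂ such that q^{t+r} ≠ 1 for all integers r ≥ 0 (equivalently, t ∉ {−r + 2πik/log q : r ∈ ℕ, k ∈ ℤ}), the series defining F(t) converges and F is complex differentiable (analytic) at t. Moreover F(t) = Σ_{n=1}^∞ q^{nt}/([n]_q)^s whenever Re(t) > 0; hence F is the analytic continuation of the two-variable q-deformed zeta function, with singularities only on the set {−r + 2πik/log q : r ∈ ℕ, k ∈ ℤ}. -/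

import Mathlib

open Real Filter Topology

/-- The binomial-expanded form of the two-variable `q`-deformed zeta function:
`F q s t = (1-q)^s Σ_{r≥0} ((s)_r/r!) q^{t+r}/(1-q^{t+r})`. -/
noncomputable def qZetaCont (q : ℝ) (s : ℂ) (t : ℂ) : ℂ :=
  ((1 - q : ℝ) : ℂ) ^ s *
    ∑' r : ℕ, (∏ i ∈ Finset.range r, (s + (i : ℂ))) / (r.factorial : ℂ) *
      (Complex.exp ((t + (r : ℂ)) * (Real.log q : ℂ)) /
        (1 - Complex.exp ((t + (r : ℂ)) * (Real.log q : ℂ))))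

/-- Dominating product `∏ (c+i)/(i+1)`. -/
noncomputable def Pb (c : ℝ) (r : ℕ) : ℝ := ∏ i ∈ Finset.range r, ((c + i) / (i + 1))

lemma Pb_pos {c : ℝ} (hc : 0 < c) (r : ℕ) : 0 < Pb c r :=
  Finset.prod_pos fun i _ => div_pos (by positivity) (by positivity)

lemma Pb_succ (c : ℝ) (r : ℕ) : Pb c (r + 1) = Pb c r * ((c + r) / (r + 1)) :=
  Finset.prod_range_succ _ _

lemma norm_coeff_le (s : ℂ) (r : ℕ) :
    ‖(∏ i ∈ Finset.range r, (s + (i : ℂ))) / (r.factorial : ℂ)‖ ≤ Pb (‖s‖ + 1) r := by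
  rw [norm_div, Complex.norm_natCast, norm_prod]
  have hfac : (r.factorial : ℝ) = ∏ i ∈ Finset.range r, ((i : ℝ) + 1) := by
    rw [← Finset.prod_range_add_one_eq_factorial]
    push_cast
    simp [add_comm]
  rw [hfac, ← Finset.prod_div_distrib]
  unfold Pb
  apply Finset.prod_le_prod
  · intro i _; positivity
  · intro i _
    gcongr
    calc ‖s + (i : ℂ)‖ ≤ ‖s‖ + ‖(i : ℂ)‖ := norm_add_le _ _
        _ = ‖s‖ + i := by rw [Complex.norm_natCast]
        _ ≤ ‖s‖ + 1 + i := by linarith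

lemma tendsto_aux_ratio (c : ℝ) :
    Tendsto (fun r : ℕ => (c + r) / (r + 1)) atTop (𝓝 1) := by
  have h : (fun r : ℕ => (c + r) / (r + 1)) = fun r : ℕ => (c - 1) * (1 / (r + 1)) + 1 := by
    funext r
    have : ((r : ℝ) + 1) ≠ 0 := by positivity
    field_simp
    ring
  rw [h]
  have := (tendsto_one_div_add_atTop_nhds_zero_nat.const_mul (c - 1)).add_const 1
  simpa using this

lemma summable_master {c b : ℝ} (hc : 0 < c) (hb0 : 0 < b) (hb1 : b < 1) :
    Summable (fun r : ℕ => Pb c r * (r + 1) * b ^ r) := by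
  have hpos : ∀ r : ℕ, 0 < Pb c r * (r + 1) * b ^ r := by
    intro r
    have := Pb_pos hc r
    positivity
  apply summable_of_ratio_test_tendsto_lt_one hb1
    (Eventually.of_forall fun r => (hpos r).ne')
  have key : ∀ r : ℕ, ‖Pb c (r + 1) * (((r + 1 : ℕ) : ℝ) + 1) * b ^ (r + 1)‖ / ‖Pb c r * (r + 1) * b ^ r‖
      = ((c + r) / (r + 1)) * ((2 + r) / (r + 1)) * b := by
    intro r
    rw [Real.norm_of_nonneg (hpos (r + 1)).le, Real.norm_of_nonneg (hpos r).le, Pb_succ]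
    have h1 : ((r : ℝ) + 1) ≠ 0 := by positivity
    have h2 : Pb c r ≠ 0 := (Pb_pos hc r).ne'
    have h3 : b ^ r ≠ 0 := by positivity
    push_cast
    rw [pow_succ]
    field_simp
    ring
  have : Tendsto (fun r : ℕ => ((c + r) / (r + 1)) * ((2 + r) / (r + 1)) * b) atTop
      (𝓝 ((1 * 1) * b)) := ((tendsto_aux_ratio c).mul (tendsto_aux_ratio 2)).mul_const b
  simp only [one_mul] at this
  exact Tendsto.congr (fun r => (key r).symm) (by push_cast; exact this)

lemma summable_master' {c b : ℝ} (hc : 0 < c) (hb0 : 0 < b) (hb1 : b < 1) :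
    Summable (fun r : ℕ => Pb c r * b ^ r) := by
  apply Summable.of_nonneg_of_le (fun r => by have := Pb_pos hc r; positivity)
    (fun r => ?_) (summable_master hc hb0 hb1)
  have h1 : 0 < Pb c r := Pb_pos hc r
  have h2 : (0:ℝ) < b ^ r := by positivity
  nlinarith [mul_nonneg (mul_nonneg h1.le (Nat.cast_nonneg r : (0:ℝ) ≤ r)) h2.le]

section Binomial
variable (s : ℂ)

/-- coefficient of the binomial series -/
noncomputable def bc (s : ℂ) (r : ℕ) : ℂ :=
  (∏ i ∈ Finset.range r, (s + (i : ℂ))) / (r.factorial : ℂ)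

lemma bc_zero : bc s 0 = 1 := by simp [bc]

lemma bc_rec (r : ℕ) : ((r : ℂ) + 1) * bc s (r + 1) = (s + r) * bc s r := by
  have hfac : ((r + 1).factorial : ℂ) = ((r : ℂ) + 1) * (r.factorial : ℂ) := by
    rw [Nat.factorial_succ]; push_cast; ring
  have h1 : ((r : ℂ) + 1) ≠ 0 := by
    exact Nat.cast_add_one_ne_zero r
  have h2 : ((r.factorial : ℂ)) ≠ 0 := Nat.cast_ne_zero.mpr r.factorial_ne_zero
  unfold bc
  rw [Finset.prod_range_succ, hfac]
  field_simp

lemma norm_bc_le (r : ℕ) : ‖bc s r‖ ≤ Pb (‖s‖ + 1) r := norm_coeff_le s r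

/-- The binomial series: for `0 ≤ y < 1`,
`∑ (s)_r/r! y^r = (1-y)^{-s} = exp(-s log(1-y))`. -/
lemma binomial_series {y : ℝ} (hy0 : 0 ≤ y) (hy1 : y < 1) :
    ∑' r : ℕ, bc s r * (y : ℂ) ^ r = Complex.exp (-s * (Real.log (1 - y) : ℂ)) := by
  classical
  set c' : ℝ := ‖s‖ + 1 with hc'
  have hc'0 : 0 < c' := by positivity
  set b : ℝ := (1 + y) / 2 with hb
  have hb0 : 0 < b := by positivity
  have hyb : y < b := by simp only [hb]; linarith
  have hb1 : b < 1 := by simp only [hb]; linarith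
  set T : Set ℝ := Set.Ioo (-b) b with hT
  have hTopen : IsOpen T := isOpen_Ioo
  have hTconn : IsPreconnected T := (convex_Ioo _ _).isPreconnected
  have h0T : (0 : ℝ) ∈ T := ⟨by linarith, hb0⟩
  have hyT : y ∈ T := ⟨by linarith, hyb⟩
  have habs : ∀ x ∈ T, |x| ≤ b := fun x hx => by
    rw [abs_le]; exact ⟨hx.1.le, hx.2.le⟩
  -- the series and its termwise derivative
  set g : ℕ → ℝ → ℂ := fun r x => bc s r * (x : ℂ) ^ r with hg
  set g' : ℕ → ℝ → ℂ := fun r x => bc s r * ((r : ℂ) * (x : ℂ) ^ (r - 1)) with hg'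
  set u : ℕ → ℝ := fun r => b⁻¹ * (Pb c' r * (r + 1) * b ^ r) with hu
  have hu_sum : Summable u := (summable_master hc'0 hb0 hb1).mul_left _
  have hgd : ∀ (r : ℕ) (x : ℝ), HasDerivAt (g r) (g' r x) x := by
    intro r x
    exact ((hasDerivAt_pow r ((x : ℝ) : ℂ)).comp_ofReal).const_mul (bc s r)
  have hbound : ∀ (r : ℕ), ∀ x ∈ T, ‖g' r x‖ ≤ u r := by
    intro r x hx
    have hax : |x| ≤ b := habs x hx
    have h1 : ‖g' r x‖ = ‖bc s r‖ * (r * |x| ^ (r - 1)) := by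
      simp [hg', norm_mul, Complex.norm_natCast, norm_pow, Complex.norm_real,
        Real.norm_eq_abs, mul_assoc]
    rw [h1]
    have h2 : (r : ℝ) * |x| ^ (r - 1) ≤ r * b ^ (r - 1) := by
      gcongr
    have h3 : (r : ℝ) * b ^ (r - 1) ≤ b⁻¹ * ((r + 1) * b ^ r) := by
      cases r with
      | zero => simp; positivity
      | succ k =>
        have : ((k + 1 : ℕ) : ℝ) * b ^ (k + 1 - 1) = (k + 1) * b ^ k := by push_cast; ring
        rw [this, pow_succ]
        have hbne : b ≠ 0 := hb0.ne'
        have : b⁻¹ * (((k + 1 : ℕ) : ℝ) + 1) * (b ^ k * b) = ((k : ℝ) + 2) * b ^ k := by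
          push_cast; field_simp; ring
        calc ((k : ℝ) + 1) * b ^ k ≤ ((k : ℝ) + 2) * b ^ k := by
              have : (0:ℝ) ≤ b ^ k := by positivity
              nlinarith
          _ = b⁻¹ * (((k + 1 : ℕ) : ℝ) + 1) * (b ^ k * b) := this.symm
          _ = b⁻¹ * ((((k + 1 : ℕ) : ℝ) + 1) * b ^ (k + 1)) := by rw [pow_succ]; ring
    calc ‖bc s r‖ * ((r : ℝ) * |x| ^ (r - 1)) ≤ Pb c' r * ((r : ℝ) * b ^ (r - 1)) := by
          apply mul_le_mul (norm_bc_le s r) h2 (by positivity)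
            ((Pb_pos hc'0 r).le)
      _ ≤ Pb c' r * (b⁻¹ * ((r + 1) * b ^ r)) := by
          apply mul_le_mul_of_nonneg_left h3 (Pb_pos hc'0 r).le
      _ = u r := by simp only [hu]; ring
  have hg0_sum : Summable (fun r => g r 0) := by
    apply summable_of_ne_finset_zero (s := {0})
    intro r hr
    have : r ≠ 0 := by simpa using hr
    simp [hg, zero_pow this]
  -- sum and its derivative
  set S : ℝ → ℂ := fun x => ∑' r, g r x with hS
  set D : ℝ → ℂ := fun x => ∑' r, g' r x with hD
  have hSd : ∀ x ∈ T, HasDerivAt S (D x) x := by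
    intro x hx
    exact hasDerivAt_tsum_of_isPreconnected hu_sum hTopen hTconn
      (fun r y _ => hgd r y) hbound h0T hg0_sum hx
  have hSg : ∀ x ∈ T, Summable (fun r => g r x) := by
    intro x hx
    exact summable_of_summable_hasDerivAt_of_isPreconnected hu_sum hTopen hTconn
      (fun r y _ => hgd r y) hbound h0T hg0_sum hx
  have hSg' : ∀ x ∈ T, Summable (fun r => g' r x) :=
    fun x hx => Summable.of_norm_bounded hu_sum (fun r => hbound r x hx)
  -- the ODE : (1 - x) * D x = s * S x on T
  have hODE : ∀ x ∈ T, (1 - (x : ℂ)) * D x = s * S x := by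
    intro x hx
    set w : ℂ := (x : ℂ) with hw
    -- D x = ∑' r, (s + r) * bc s r * w ^ r
    have hshift : ∀ r : ℕ, g' (r + 1) x = (s + r) * bc s r * w ^ r := by
      intro r
      have : g' (r + 1) x = (((r : ℂ) + 1) * bc s (r + 1)) * w ^ r := by
        simp only [hg', hw]
        push_cast
        ring_nf
      rw [this, bc_rec]
    have hD_eq : D x = ∑' r : ℕ, (s + r) * bc s r * w ^ r := by
      simp only [hD]
      rw [Summable.tsum_eq_zero_add (hSg' x hx)]
      have h0 : g' 0 x = 0 := by simp [hg']
      rw [h0, zero_add]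
      exact tsum_congr hshift
    have hsum1 : Summable (fun r : ℕ => (s + r) * bc s r * w ^ r) := by
      refine Summable.congr ((summable_nat_add_iff 1).mpr (hSg' x hx)) ?_
      exact hshift
    have hsum0 : Summable (fun r : ℕ => bc s r * w ^ r) := hSg x hx
    have hsum2 : Summable (fun r : ℕ => s * (bc s r * w ^ r)) := hsum0.mul_left s
    -- r * bc r * w^r summable and its sum equals D x - s * S x
    have hdiff : D x - s * S x = ∑' r : ℕ, (r : ℂ) * bc s r * w ^ r := by
      rw [hD_eq]
      simp only [hS]
      rw [← tsum_mul_left (a := s)]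
      rw [← Summable.tsum_sub hsum1 hsum2]
      apply tsum_congr
      intro r
      ring
    have hsum3 : Summable (fun r : ℕ => (r : ℂ) * bc s r * w ^ r) := by
      refine Summable.congr (hsum1.sub hsum2) ?_
      intro r; ring
    -- Σ r bc r w^r = Σ (s+r) bc r w^{r+1} = w * D x
    have hshift2 : D x - s * S x = w * D x := by
      rw [hdiff, Summable.tsum_eq_zero_add hsum3]
      simp only [Nat.cast_zero, zero_mul, zero_add]
      have : ∀ r : ℕ, ((r + 1 : ℕ) : ℂ) * bc s (r + 1) * w ^ (r + 1)
          = w * ((s + r) * bc s r * w ^ r) := by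
        intro r
        have h := bc_rec s r
        push_cast
        linear_combination w ^ (r + 1) * h
      rw [tsum_congr this, tsum_mul_left, ← hD_eq]
    have : (1 - w) * D x = D x - w * D x := by ring
    rw [this, ← hshift2]
    ring
  -- the auxiliary function φ = exp(s log(1-x)) * S x has zero derivative on T
  set φ : ℝ → ℂ := fun x => Complex.exp (s * (Real.log (1 - x) : ℂ)) * S x with hφ
  have hφd : ∀ x ∈ T, HasDerivAt φ 0 x := by
    intro x hx
    have hx1 : (0 : ℝ) < 1 - x := by
      have := hx.2; simp only [hT, Set.mem_Ioo] at hx; linarith [hx.2, hb1]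
    have hin : HasDerivAt (fun x : ℝ => Real.log (1 - x)) (-(1 - x)⁻¹) x := by
      have h1 : HasDerivAt (fun x : ℝ => 1 - x) (-1) x := (hasDerivAt_id x).const_sub 1
      have h2 := (Real.hasDerivAt_log hx1.ne').comp x h1
      simpa [Function.comp_def] using h2
    have hin2 : HasDerivAt (fun x : ℝ => (Real.log (1 - x) : ℂ)) ((-(1 - x)⁻¹ : ℝ) : ℂ) x :=
      hin.ofReal_comp
    have hin3 : HasDerivAt (fun x : ℝ => s * (Real.log (1 - x) : ℂ))
        (s * ((-(1 - x)⁻¹ : ℝ) : ℂ)) x := hin2.const_mul s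
    have hexp : HasDerivAt (fun x : ℝ => Complex.exp (s * (Real.log (1 - x) : ℂ)))
        (Complex.exp (s * (Real.log (1 - x) : ℂ)) * (s * ((-(1 - x)⁻¹ : ℝ) : ℂ))) x :=
      hin3.cexp
    have hmul := hexp.mul (hSd x hx)
    have hne : (1 : ℂ) - (x : ℂ) ≠ 0 := by
      intro h
      have : (x : ℂ) = 1 := by linear_combination -h
      have : x = 1 := by exact_mod_cast this
      linarith
    have hcast : ((-(1 - x)⁻¹ : ℝ) : ℂ) = -((1 : ℂ) - (x : ℂ))⁻¹ := by
      push_cast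
      ring
    have hDx : D x = s * S x * ((1 : ℂ) - (x : ℂ))⁻¹ :=
      eq_mul_inv_iff_mul_eq₀ hne |>.mpr (by linear_combination hODE x hx)
    have hzero : Complex.exp (s * (Real.log (1 - x) : ℂ)) * (s * ((-(1 - x)⁻¹ : ℝ) : ℂ)) * S x
        + Complex.exp (s * (Real.log (1 - x) : ℂ)) * D x = 0 := by
      rw [hcast, hDx]
      ring
    have : HasDerivAt (fun x : ℝ => Complex.exp (s * (Real.log (1 - x) : ℂ)) * S x) 0 x := by
      rw [← hzero]
      exact hmul
    exact this
  -- φ is constant on T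
  have hconst : ∀ x ∈ T, φ x = φ 0 := by
    intro x hx
    have h := Convex.norm_image_sub_le_of_norm_hasDerivWithin_le
      (f := φ) (f' := fun _ => (0 : ℂ)) (C := 0)
      (fun z hz => (hφd z hz).hasDerivWithinAt) (fun z _ => by simp)
      (convex_Ioo _ _) h0T hx
    rw [zero_mul] at h
    have := norm_le_zero_iff.mp h
    exact sub_eq_zero.mp this
  have hS0 : S 0 = 1 := by
    simp only [hS]
    rw [tsum_eq_single 0 (fun r hr => by
      simp only [hg, Complex.ofReal_zero, zero_pow hr, mul_zero])]
    simp [hg, bc_zero]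
  have hφ0 : φ 0 = 1 := by
    simp only [hφ, hS0]
    norm_num
  have h1 := hconst y hyT
  rw [hφ0] at h1
  simp only [hφ] at h1
  have h2 : S y = (Complex.exp (s * (Real.log (1 - y) : ℂ)))⁻¹ :=
    eq_inv_of_mul_eq_one_left (by linear_combination h1)
  have hSy : ∑' r : ℕ, bc s r * (y : ℂ) ^ r = S y := rfl
  rw [hSy, h2, ← Complex.exp_neg, neg_mul]

end Binomial

/-- `q^{t+r}` as a complex exponential. -/
noncomputable def Ef (q : ℝ) (t : ℂ) (r : ℕ) : ℂ :=
  Complex.exp ((t + (r : ℂ)) * (Real.log q : ℂ))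

/-- the general term of the expanded series. -/
noncomputable def term (q : ℝ) (s t : ℂ) (r : ℕ) : ℂ :=
  bc s r * (Ef q t r / (1 - Ef q t r))

lemma norm_Ef {q : ℝ} (hq0 : 0 < q) (t : ℂ) (r : ℕ) :
    ‖Ef q t r‖ = Real.exp (t.re * Real.log q) * q ^ r := by
  rw [Ef, Complex.norm_exp]
  have hre : ((t + (r : ℂ)) * (Real.log q : ℂ)).re = (t.re + r) * Real.log q := by
    simp [Complex.mul_re, Complex.add_re, Complex.ofReal_re, Complex.ofReal_im,
      Complex.natCast_re, Complex.natCast_im]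
  rw [hre, add_mul, Real.exp_add, Real.exp_nat_mul, Real.exp_log hq0]

lemma div_one_sub_bound {z : ℂ} (hz : ‖z‖ ≤ 1 / 2) : ‖z / (1 - z)‖ ≤ 2 * ‖z‖ := by
  rw [norm_div]
  have h1 : (1 : ℝ) / 2 ≤ ‖1 - z‖ := by
    have := norm_sub_norm_le (1 : ℂ) z
    rw [norm_one] at this
    linarith
  rw [div_le_iff₀ (by linarith)]
  nlinarith [norm_nonneg z]

lemma one_sub_ne_of_norm_le {z : ℂ} (hz : ‖z‖ ≤ 1 / 2) : 1 - z ≠ 0 := by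
  intro h
  have : z = 1 := by linear_combination -h
  rw [this, norm_one] at hz
  norm_num at hz

lemma exists_R {q : ℝ} (hq0 : 0 < q) (hq1 : q < 1) (A : ℝ) :
    ∃ R : ℕ, ∀ r : ℕ, R ≤ r → A * q ^ r ≤ 1 / 2 := by
  have h : Tendsto (fun r : ℕ => A * q ^ r) atTop (𝓝 (A * 0)) :=
    (tendsto_pow_atTop_nhds_zero_of_lt_one hq0.le hq1).const_mul A
  rw [mul_zero] at h
  have := h.eventually_le_const (show (0:ℝ) < 1/2 by norm_num)
  obtain ⟨R, hR⟩ := eventually_atTop.mp this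
  exact ⟨R, fun r hr => hR r hr⟩

lemma summable_term {q : ℝ} (hq0 : 0 < q) (hq1 : q < 1) (s t : ℂ) :
    Summable (term q s t) := by
  set c' : ℝ := ‖s‖ + 1 with hc'
  have hc'0 : 0 < c' := by positivity
  set A : ℝ := Real.exp (t.re * Real.log q) with hA
  have hA0 : 0 < A := Real.exp_pos _
  obtain ⟨R, hR⟩ := exists_R hq0 hq1 A
  rw [← summable_nat_add_iff R]
  apply Summable.of_norm_bounded (g := fun n : ℕ => 2 * A * (Pb c' (n + R) * q ^ (n + R)))
  · exact (summable_nat_add_iff R).mpr ((summable_master' hc'0 hq0 hq1).mul_left (2 * A))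
  · intro n
    have hE : ‖Ef q t (n + R)‖ = A * q ^ (n + R) := norm_Ef hq0 t (n + R)
    have hE2 : ‖Ef q t (n + R)‖ ≤ 1 / 2 := by
      rw [hE]; exact hR (n + R) (Nat.le_add_left R n)
    rw [term, norm_mul]
    calc ‖bc s (n + R)‖ * ‖Ef q t (n + R) / (1 - Ef q t (n + R))‖
        ≤ Pb c' (n + R) * (2 * ‖Ef q t (n + R)‖) := by
          apply mul_le_mul (norm_bc_le s (n + R)) (div_one_sub_bound hE2)
            (norm_nonneg _) (Pb_pos hc'0 _).le
      _ = 2 * A * (Pb c' (n + R) * q ^ (n + R)) := by rw [hE]; ring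

lemma part2 {q : ℝ} (hq0 : 0 < q) (hq1 : q < 1) (t : ℂ) :
    (∀ r : ℕ, Complex.exp ((t + (r : ℂ)) * (Real.log q : ℂ)) ≠ 1) ↔
      (∀ r : ℕ, ∀ k : ℤ,
        t ≠ -(r : ℂ) + 2 * (π : ℂ) * Complex.I * (k : ℂ) / (Real.log q : ℂ)) := by
  have hL : (Real.log q : ℂ) ≠ 0 := by
    have := Real.log_neg hq0 hq1
    exact_mod_cast this.ne
  constructor
  · intro h r k heq
    apply h r
    rw [Complex.exp_eq_one_iff]
    refine ⟨k, ?_⟩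
    rw [heq]
    field_simp
    ring
  · intro h r h1
    obtain ⟨k, hk⟩ := Complex.exp_eq_one_iff.mp h1
    apply h r k
    have : t + (r : ℂ) = (k : ℂ) * (2 * π * Complex.I) / (Real.log q : ℂ) := by
      field_simp at hk ⊢
      linear_combination hk
    rw [eq_sub_of_add_eq this]
    ring

lemma continuous_Ef (q : ℝ) (r : ℕ) : Continuous (fun w : ℂ => Ef q w r) :=
  Complex.continuous_exp.comp ((continuous_id.add continuous_const).mul continuous_const)

lemma diff_at {q : ℝ} (hq0 : 0 < q) (hq1 : q < 1) (s t : ℂ)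
    (h : ∀ r : ℕ, Ef q t r ≠ 1) : DifferentiableAt ℂ (qZetaCont q s) t := by
  set c' : ℝ := ‖s‖ + 1 with hc'
  have hc'0 : 0 < c' := by positivity
  have hL : Real.log q < 0 := Real.log_neg hq0 hq1
  set A : ℝ := Real.exp ((t.re - 1) * Real.log q) with hA
  have hA0 : 0 < A := Real.exp_pos _
  obtain ⟨R, hR⟩ := exists_R hq0 hq1 A
  -- eventual smallness properties near t
  have hev : ∀ᶠ w in 𝓝 t,
      (∀ r ∈ Finset.range R, 1 - Ef q w r ≠ 0 ∧ ‖term q s w r‖ < ‖term q s t r‖ + 1)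
        ∧ dist w t < 1 := by
    apply Filter.Eventually.and
    · rw [Filter.eventually_all_finset]
      intro r _
      have hcE : ContinuousAt (fun w : ℂ => Ef q w r) t := (continuous_Ef q r).continuousAt
      have hne : (1 : ℂ) - Ef q t r ≠ 0 := sub_ne_zero_of_ne (h r).symm
      have h1 : ∀ᶠ w in 𝓝 t, 1 - Ef q w r ≠ 0 :=
        ((continuous_const.sub (continuous_Ef q r)).continuousAt).eventually_ne hne
      have hcterm : ContinuousAt (fun w : ℂ => term q s w r) t := by
        apply ContinuousAt.mul continuousAt_const
        exact hcE.div ((continuous_const.sub (continuous_Ef q r)).continuousAt) hne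
      have h2 : ∀ᶠ w in 𝓝 t, ‖term q s w r‖ < ‖term q s t r‖ + 1 :=
        (hcterm.norm.tendsto).eventually_lt_const (lt_add_one _)
      exact h1.and h2
    · have : Tendsto (fun w : ℂ => dist w t) (𝓝 t) (𝓝 (dist t t)) :=
        (continuous_id.dist continuous_const).continuousAt
      rw [dist_self] at this
      exact this.eventually_lt_const one_pos
  obtain ⟨δ, hδ0, hδ⟩ := Metric.eventually_nhds_iff.mp hev
  set U : Set ℂ := Metric.ball t δ with hU
  have hUopen : IsOpen U := Metric.isOpen_ball
  have htU : t ∈ U := Metric.mem_ball_self hδ0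
  have hWprop : ∀ w ∈ U, (∀ r ∈ Finset.range R,
      1 - Ef q w r ≠ 0 ∧ ‖term q s w r‖ < ‖term q s t r‖ + 1) ∧ dist w t < 1 :=
    fun w hw => hδ (Metric.mem_ball.mp hw)
  have hre : ∀ w ∈ U, t.re - 1 < w.re := by
    intro w hw
    have h1 : dist w t < 1 := (hWprop w hw).2
    have h2 : |w.re - t.re| ≤ dist w t := by
      rw [Complex.dist_eq]
      have := Complex.abs_re_le_norm (w - t)
      simpa [Complex.sub_re] using this
    have := abs_lt.mp (h2.trans_lt h1)
    linarith [this.1]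
  have hEbound : ∀ w ∈ U, ∀ r : ℕ, ‖Ef q w r‖ ≤ A * q ^ r := by
    intro w hw r
    rw [norm_Ef hq0]
    have h1 : w.re * Real.log q ≤ (t.re - 1) * Real.log q := by
      nlinarith [hre w hw]
    have := Real.exp_le_exp.mpr h1
    have hq : (0:ℝ) < q ^ r := by positivity
    rw [hA]
    nlinarith
  -- the dominating function
  set u : ℕ → ℝ := fun r => if r < R then ‖term q s t r‖ + 1
    else 2 * A * (Pb c' r * q ^ r) with hu
  have hu_sum : Summable u := by
    rw [← summable_nat_add_iff R]
    apply Summable.congr ((summable_nat_add_iff R).mpr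
      ((summable_master' hc'0 hq0 hq1).mul_left (2 * A)))
    intro n
    have : ¬ (n + R < R) := by omega
    simp [hu, this]
  have hden : ∀ r : ℕ, ∀ w ∈ U, 1 - Ef q w r ≠ 0 := by
    intro r w hw
    by_cases hr : r < R
    · exact ((hWprop w hw).1 r (Finset.mem_range.mpr hr)).1
    · apply one_sub_ne_of_norm_le
      exact (hEbound w hw r).trans (hR r (by omega))
  have hterm_bound : ∀ r : ℕ, ∀ w : ℂ, w ∈ U → ‖term q s w r‖ ≤ u r := by
    intro r w hw
    by_cases hr : r < R
    · rw [hu]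
      simp only [if_pos hr]
      exact (((hWprop w hw).1 r (Finset.mem_range.mpr hr)).2).le
    · rw [hu]
      simp only [if_neg hr]
      have hE2 : ‖Ef q w r‖ ≤ 1 / 2 := (hEbound w hw r).trans (hR r (by omega))
      rw [term, norm_mul]
      calc ‖bc s r‖ * ‖Ef q w r / (1 - Ef q w r)‖
          ≤ Pb c' r * (2 * ‖Ef q w r‖) :=
            mul_le_mul (norm_bc_le s r) (div_one_sub_bound hE2) (norm_nonneg _)
              (Pb_pos hc'0 _).le
        _ ≤ Pb c' r * (2 * (A * q ^ r)) := by
            have := hEbound w hw r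
            have := Pb_pos hc'0 r
            nlinarith
        _ = 2 * A * (Pb c' r * q ^ r) := by ring
  have hdiffOn : ∀ r : ℕ, DifferentiableOn ℂ (fun w => term q s w r) U := by
    intro r
    have h1 : Differentiable ℂ (fun w : ℂ => Ef q w r) := by
      unfold Ef
      exact Complex.differentiable_exp.comp ((differentiable_id.add (differentiable_const _)).mul
        (differentiable_const _))
    apply DifferentiableOn.const_mul
    exact DifferentiableOn.div h1.differentiableOn
      ((differentiable_const (1:ℂ)).sub h1).differentiableOn (fun w hw => hden r w hw)
  have hmain : DifferentiableOn ℂ (fun w : ℂ => ∑' r : ℕ, term q s w r) U :=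
    Complex.differentiableOn_tsum_of_summable_norm hu_sum hdiffOn hUopen hterm_bound
  have hat : DifferentiableAt ℂ (fun w : ℂ => ∑' r : ℕ, term q s w r) t :=
    hmain.differentiableAt (hUopen.mem_nhds htU)
  have : qZetaCont q s = fun w : ℂ => ((1 - q : ℝ) : ℂ) ^ s * ∑' r : ℕ, term q s w r := rfl
  rw [this]
  exact hat.const_mul _

lemma cpow_pos_real {a : ℝ} (ha : 0 < a) (s : ℂ) :
    ((a : ℂ)) ^ s = Complex.exp (s * (Real.log a : ℂ)) := by
  rw [Complex.cpow_def_of_ne_zero (Complex.ofReal_ne_zero.mpr ha.ne'),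
    ← Complex.ofReal_log ha.le, mul_comm]

lemma part3 {q : ℝ} (hq0 : 0 < q) (hq1 : q < 1) (s t : ℂ) (ht : 0 < t.re) :
    qZetaCont q s t = ∑' n : ℕ, Complex.exp (((n : ℂ) + 1) * t * (Real.log q : ℂ)) /
      (((1 - q ^ (n + 1)) / (1 - q) : ℝ) : ℂ) ^ s := by
  set L : ℝ := Real.log q with hLdef
  have hL : L < 0 := Real.log_neg hq0 hq1
  set c' : ℝ := ‖s‖ + 1 with hc'
  have hc'0 : 0 < c' := by positivity
  set A : ℝ := Real.exp (t.re * L) with hA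
  have hA0 : 0 < A := Real.exp_pos _
  have hA1 : A < 1 := by
    rw [hA, ← Real.exp_zero]
    apply Real.exp_lt_exp.mpr
    nlinarith
  have hXnorm : ∀ r : ℕ, ‖Ef q t r‖ = A * q ^ r := fun r => norm_Ef hq0 t r
  have hXleA : ∀ r : ℕ, ‖Ef q t r‖ ≤ A := by
    intro r
    rw [hXnorm r]
    have h1 : q ^ r ≤ 1 := pow_le_one₀ hq0.le hq1.le
    nlinarith
  have hXlt : ∀ r : ℕ, ‖Ef q t r‖ < 1 := fun r => lt_of_le_of_lt (hXleA r) hA1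
  -- the double-indexed family
  set f : ℕ → ℕ → ℂ := fun r n => bc s r * Ef q t r ^ (n + 1) with hf
  have hf_norm : ∀ r n, ‖f r n‖ = ‖bc s r‖ * ‖Ef q t r‖ ^ (n + 1) := by
    intro r n; rw [hf]; simp [norm_mul, norm_pow]
  have hinner_sum : ∀ r, Summable (fun n => ‖f r n‖) := by
    intro r
    apply Summable.congr _ (fun n => (hf_norm r n).symm)
    have hg : Summable (fun n : ℕ => ‖bc s r‖ * (‖Ef q t r‖ * ‖Ef q t r‖ ^ n)) :=
      ((summable_geometric_of_lt_one (norm_nonneg _) (hXlt r)).mul_left _).mul_left _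
    exact hg.congr (fun n => by rw [← pow_succ'])
  have hinner_val : ∀ r, ∑' n, ‖f r n‖
      = ‖bc s r‖ * (‖Ef q t r‖ * (1 - ‖Ef q t r‖)⁻¹) := by
    intro r
    rw [tsum_congr (fun n => hf_norm r n)]
    have h1 : ∀ n : ℕ, ‖bc s r‖ * ‖Ef q t r‖ ^ (n + 1)
        = ‖bc s r‖ * ‖Ef q t r‖ * ‖Ef q t r‖ ^ n := fun n => by rw [pow_succ']; ring
    rw [tsum_congr h1, tsum_mul_left, tsum_geometric_of_lt_one (norm_nonneg _) (hXlt r)]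
    ring
  have houter_sum : Summable (fun r => ∑' n, ‖f r n‖) := by
    apply Summable.of_nonneg_of_le (fun r => tsum_nonneg fun n => norm_nonneg _)
      (fun r => ?_) ((summable_master' hc'0 hq0 hq1).mul_left (A * (1 - A)⁻¹))
    rw [hinner_val r]
    have h2 : (1 - ‖Ef q t r‖)⁻¹ ≤ (1 - A)⁻¹ := by
      apply inv_anti₀ (by linarith) (by linarith [hXleA r])
    have h3 : ‖Ef q t r‖ * (1 - ‖Ef q t r‖)⁻¹ ≤ (A * q ^ r) * (1 - A)⁻¹ := by
      have h4 : (0:ℝ) < 1 - ‖Ef q t r‖ := by linarith [hXlt r]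
      have := hXnorm r
      nlinarith [norm_nonneg (Ef q t r), inv_nonneg.mpr (le_of_lt (by linarith : (0:ℝ) < 1 - A))]
    calc ‖bc s r‖ * (‖Ef q t r‖ * (1 - ‖Ef q t r‖)⁻¹)
        ≤ Pb c' r * ((A * q ^ r) * (1 - A)⁻¹) :=
          mul_le_mul (norm_bc_le s r) h3
            (by
              have h4 : (0:ℝ) < 1 - ‖Ef q t r‖ := by linarith [hXlt r]
              positivity) (Pb_pos hc'0 r).le
      _ = A * (1 - A)⁻¹ * (Pb c' r * q ^ r) := by ring
  have huncurry : Summable (Function.uncurry f) := by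
    apply Summable.of_norm
    have := (summable_prod_of_nonneg
      (f := fun p : ℕ × ℕ => ‖Function.uncurry f p‖) (fun p => norm_nonneg _)).mpr
      ⟨fun r => hinner_sum r, by
        apply houter_sum.congr
        intro r
        rfl⟩
    exact this
  -- Step A : term r = ∑' n, f r n
  have hstepA : ∀ r : ℕ, term q s t r = ∑' n, f r n := by
    intro r
    have hgeo : ∑' n : ℕ, Ef q t r ^ (n + 1) = Ef q t r / (1 - Ef q t r) := by
      have h := (hasSum_geometric_of_norm_lt_one (hXlt r)).tsum_eq
      calc ∑' n : ℕ, Ef q t r ^ (n + 1) = ∑' n : ℕ, Ef q t r * Ef q t r ^ n :=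
            tsum_congr fun n => by rw [pow_succ']
        _ = Ef q t r * ∑' n : ℕ, Ef q t r ^ n := tsum_mul_left
        _ = Ef q t r * (1 - Ef q t r)⁻¹ := by rw [h]
        _ = Ef q t r / (1 - Ef q t r) := (div_eq_mul_inv _ _).symm
    rw [term, ← hgeo, ← tsum_mul_left]
  -- Step B : swap the two sums
  have hstepB : ∑' r : ℕ, ∑' n : ℕ, f r n = ∑' n : ℕ, ∑' r : ℕ, f r n :=
    (Summable.tsum_comm huncurry).symm
  -- Step C : evaluate the inner sum over r via the binomial series
  have hstepC : ∀ n : ℕ, ∑' r : ℕ, f r n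
      = Complex.exp (((n : ℂ) + 1) * t * (L : ℂ)) *
        Complex.exp (-s * (Real.log (1 - q ^ (n + 1)) : ℂ)) := by
    intro n
    set y : ℝ := q ^ (n + 1) with hy
    have hy0 : 0 ≤ y := by positivity
    have hy1 : y < 1 := pow_lt_one₀ hq0.le hq1 n.succ_ne_zero
    set K : ℂ := Complex.exp (((n : ℂ) + 1) * t * (L : ℂ)) with hK
    have hXpow : ∀ r : ℕ, Ef q t r ^ (n + 1) = K * ((y : ℂ)) ^ r := by
      intro r
      have h1 : Ef q t r ^ (n + 1) = Complex.exp (((n + 1 : ℕ) : ℂ) * ((t + r) * (L : ℂ))) := by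
        rw [Ef, ← Complex.exp_nat_mul]
      have h2 : (((n + 1 : ℕ) : ℂ) * ((t + r) * (L : ℂ)))
          = ((n : ℂ) + 1) * t * (L : ℂ) + (r : ℂ) * (((n + 1 : ℕ) : ℂ) * (L : ℂ)) := by
        push_cast; ring
      have h3 : Complex.exp ((r : ℂ) * (((n + 1 : ℕ) : ℂ) * (L : ℂ)))
          = Complex.exp (((n + 1 : ℕ) : ℂ) * (L : ℂ)) ^ r := Complex.exp_nat_mul _ r
      have h4 : Complex.exp (((n + 1 : ℕ) : ℂ) * (L : ℂ)) = ((y : ℂ)) := by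
        have h5 : (((n + 1 : ℕ) : ℂ) * (L : ℂ)) = ((((n + 1 : ℕ) : ℝ) * L : ℝ) : ℂ) := by
          push_cast; ring
        rw [h5, ← Complex.ofReal_exp, Real.exp_nat_mul, Real.exp_log hq0, hy]
      rw [h1, h2, Complex.exp_add, h3, h4, hK]
    calc ∑' r : ℕ, f r n = ∑' r : ℕ, K * (bc s r * ((y : ℂ)) ^ r) := by
          apply tsum_congr
          intro r
          rw [hf]
          simp only
          rw [hXpow r]
          ring
      _ = K * ∑' r : ℕ, bc s r * ((y : ℂ)) ^ r := tsum_mul_left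
      _ = K * Complex.exp (-s * (Real.log (1 - y) : ℂ)) := by
          rw [binomial_series s hy0 hy1]
  -- assemble
  have hq1' : (0:ℝ) < 1 - q := by linarith
  have hC : ((1 - q : ℝ) : ℂ) ^ s = Complex.exp (s * (Real.log (1 - q) : ℂ)) :=
    cpow_pos_real hq1' s
  have hterm_eq : qZetaCont q s t = ((1 - q : ℝ) : ℂ) ^ s * ∑' r : ℕ, term q s t r := rfl
  rw [hterm_eq, tsum_congr hstepA, hstepB, tsum_congr hstepC, hC, ← tsum_mul_left]
  apply tsum_congr
  intro n
  have hyq : (0:ℝ) < 1 - q ^ (n + 1) := by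
    have : q ^ (n + 1) < 1 := pow_lt_one₀ hq0.le hq1 n.succ_ne_zero
    linarith
  have hpos : (0:ℝ) < (1 - q ^ (n + 1)) / (1 - q) := div_pos hyq hq1'
  rw [cpow_pos_real hpos s, Real.log_div hyq.ne' hq1'.ne']
  rw [Complex.ofReal_sub, div_eq_mul_inv, ← Complex.exp_neg]
  simp only [← Complex.exp_add]
  congr 1
  push_cast
  ring

/-- For fixed real `0 < q < 1` and `s ∈ ℂ`, the function
`F(t) = (1-q)^s Σ_{r≥0} ((s)_r/r!) q^{t+r}/(1-q^{t+r})` is: defined (the series converges)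
and complex differentiable at every `t` with `q^{t+r} ≠ 1` for all `r ∈ ℕ` — a condition
equivalent to `t ∉ {-r + 2πik/log q : r ∈ ℕ, k ∈ ℤ}` — and agrees with the two-variable
`q`-deformed zeta function `f_q(s,t) = Σ_{n≥1} q^{nt}/([n]_q)^s` whenever `Re t > 0`;
hence `F` is its analytic continuation, with singularities only on that set. -/
theorem stmt9 (q : ℝ) (hq0 : 0 < q) (hq1 : q < 1) (s : ℂ) :
    (∀ t : ℂ, (∀ r : ℕ, Complex.exp ((t + (r : ℂ)) * (Real.log q : ℂ)) ≠ 1) →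
      Summable (fun r : ℕ =>
        (∏ i ∈ Finset.range r, (s + (i : ℂ))) / (r.factorial : ℂ) *
          (Complex.exp ((t + (r : ℂ)) * (Real.log q : ℂ)) /
            (1 - Complex.exp ((t + (r : ℂ)) * (Real.log q : ℂ))))) ∧
      DifferentiableAt ℂ (qZetaCont q s) t) ∧
    (∀ t : ℂ, (∀ r : ℕ, Complex.exp ((t + (r : ℂ)) * (Real.log q : ℂ)) ≠ 1) ↔
      (∀ r : ℕ, ∀ k : ℤ,
        t ≠ -(r : ℂ) + 2 * (π : ℂ) * Complex.I * (k : ℂ) / (Real.log q : ℂ))) ∧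
    (∀ t : ℂ, 0 < t.re →
      qZetaCont q s t =
        ∑' n : ℕ, Complex.exp (((n : ℂ) + 1) * t * (Real.log q : ℂ)) /
          (((1 - q ^ (n + 1)) / (1 - q) : ℝ) : ℂ) ^ s) := by
  refine ⟨fun t htr => ⟨?_, ?_⟩, fun t => part2 hq0 hq1 t, fun t ht => part3 hq0 hq1 s t ht⟩
  · exact summable_term hq0 hq1 s t
  · exact diff_at hq0 hq1 s t htr
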